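/- Let H be a compact Hausdorff space and X ⊆ H a dense open subset. Equip X with the topology and uniformity inherited from H, let ℬ be the collection of subsets of X whose closure in H is compact and contained in X (equivalently, precompact in X), and let 𝒞 be the collection of complex-valued functions on X that are restrictions of continuous functions H → ℂ (equivalently, bounded uniformly continuous functions on X). Then a family 𝒰 of subsets of X is uniformly (𝒞,ℬ)-bounded if and only if 𝒰 is continuously controlled by H. -/

import Mathlib

/-- The star `st(A,𝒰)` of a set `A` with respect to a family `𝒰`. -/
def st {X : Type*} (A : Set X) (𝒰 : Set (Set X)) : Set X :=
  A ∪ ⋃ U ∈ {U ∈ 𝒰 | (U ∩ A).Nonempty}, U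

/-- A family `𝒰` is uniformly `(𝒞,ℬ)`-bounded, where the predicate `WB`
singles out the weakly bounded sets of the bounded structure `ℬ`:
(1) stars of weakly bounded sets are weakly bounded; (2) for every weakly
bounded `B`, every `f ∈ 𝒞` and `ε > 0` there is a weakly bounded `B' ⊇ B`
with `diam f(U ∖ B') ≤ ε` for all `U ∈ 𝒰`. -/
def UnifCB {X : Type*} (WB : Set X → Prop) (𝒞 : Set (X → ℂ))
    (𝒰 : Set (Set X)) : Prop :=
  (∀ B : Set X, WB B → WB (st B 𝒰)) ∧
  ∀ B : Set X, WB B → ∀ f ∈ 𝒞, ∀ ε : ℝ, 0 < ε →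
    ∃ B' : Set X, WB B' ∧ B ⊆ B' ∧
      ∀ U ∈ 𝒰, ∀ x ∈ U \ B', ∀ y ∈ U \ B', dist (f x) (f y) ≤ ε

/-- A family `𝒰` of subsets of the dense open subset `X` of `H` is continuously
controlled by `H`: (1) stars of compact sets have compact closure (in `X`,
equivalently compact closure in `H` contained in `X`); (2) for every point
`x ∈ H ∖ X` and neighborhood `V` of `x` there is a smaller neighborhood `W`
such that every `U ∈ 𝒰` meeting `W` is contained in `V`. -/
def ContControlled {H : Type*} [TopologicalSpace H] (X : Set H)
    (𝒰 : Set (Set ↥X)) : Prop :=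
  (∀ C : Set ↥X, IsCompact C → IsCompact (closure (st C 𝒰))) ∧
  ∀ x : H, x ∉ X → ∀ V : Set H, IsOpen V → x ∈ V →
    ∃ W : Set H, IsOpen W ∧ x ∈ W ∧ W ⊆ V ∧
      ∀ U ∈ 𝒰, ((Subtype.val '' U) ∩ W).Nonempty → Subtype.val '' U ⊆ V

open Set

lemma st_mono {X : Type*} {A A' : Set X} (h : A ⊆ A') (𝒰 : Set (Set X)) :
    st A 𝒰 ⊆ st A' 𝒰 := by
  intro x hx
  rcases hx with hx | hx
  · exact Or.inl (h hx)
  · refine Or.inr ?_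
    rw [mem_iUnion₂] at hx ⊢
    obtain ⟨U, hUs, hxU⟩ := hx
    exact ⟨U, ⟨hUs.1, hUs.2.mono (inter_subset_inter_right U h)⟩, hxU⟩

lemma mem_st_left {X : Type*} {A : Set X} {𝒰 : Set (Set X)} {x : X} (hx : x ∈ A) :
    x ∈ st A 𝒰 := Or.inl hx

lemma mem_st_of_mem {X : Type*} {A : Set X} {𝒰 : Set (Set X)} {U : Set X}
    (hU : U ∈ 𝒰) (hne : (U ∩ A).Nonempty) {x : X} (hx : x ∈ U) : x ∈ st A 𝒰 :=
  Or.inr (mem_iUnion₂.mpr ⟨U, ⟨hU, hne⟩, hx⟩)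

theorem stmt_9 {H : Type*} [TopologicalSpace H] [CompactSpace H] [T2Space H]
    (X : Set H) (hXopen : IsOpen X) (hXdense : Dense X) (𝒰 : Set (Set ↥X)) :
    UnifCB (fun B : Set ↥X => IsCompact (closure B))
        {f : ↥X → ℂ | ∃ g : H → ℂ, Continuous g ∧ ∀ x : ↥X, f x = g ↑x} 𝒰 ↔
      ContControlled X 𝒰 := by
  constructor
  · rintro ⟨h1, h2⟩
    constructor
    · intro C hC
      refine h1 C ?_
      show IsCompact (closure C)
      rwa [hC.isClosed.closure_eq]
    · intro x hx V hV hxV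
      obtain ⟨g, hg0, hg1, hg01⟩ :=
        exists_continuous_zero_one_of_isClosed (isClosed_compl_iff.mpr hV)
          isClosed_singleton (disjoint_singleton_right.mpr (by simpa using hxV))
      set f : ↥X → ℂ := fun p => ((g ↑p : ℝ) : ℂ) with hfdef
      have hf : f ∈ {f : ↥X → ℂ | ∃ g : H → ℂ, Continuous g ∧ ∀ x : ↥X, f x = g ↑x} :=
        ⟨fun h => ((g h : ℝ) : ℂ), Complex.continuous_ofReal.comp g.continuous, fun _ => rfl⟩
      obtain ⟨B', hB'wb, -, hB'⟩ := h2 ∅ (by simp [isCompact_empty]) f hf (1/2) (by norm_num)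
      set K' : Set H := Subtype.val '' (closure (st B' 𝒰)) with hK'def
      have hK'c : IsCompact K' := (h1 B' hB'wb).image continuous_subtype_val
      have hK'X : K' ⊆ X := by rintro _ ⟨p, -, rfl⟩; exact p.2
      refine ⟨(fun h => g h) ⁻¹' Ioi (3/4 : ℝ) ∩ K'ᶜ, ?_, ?_, ?_, ?_⟩
      · exact (isOpen_Ioi.preimage g.continuous).inter hK'c.isClosed.isOpen_compl
      · constructor
        · have : g x = 1 := hg1 rfl
          simp [this]; norm_num
        · exact fun h => hx (hK'X h)
      · intro h hh
        by_contra hhV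
        have : g h = 0 := hg0 hhV
        have : (3/4 : ℝ) < 0 := by rw [← this]; exact hh.1
        linarith
      · rintro U hU ⟨_, ⟨u, huU, rfl⟩, hu34, huK'⟩
        have huB' : u ∉ B' := fun h => huK' ⟨u, subset_closure (mem_st_left h), rfl⟩
        rintro _ ⟨y, hyU, rfl⟩
        have hyB' : y ∉ B' := fun h =>
          huK' ⟨u, subset_closure (mem_st_of_mem hU ⟨y, hyU, h⟩ huU), rfl⟩
        have hd := hB' U hU u ⟨huU, huB'⟩ y ⟨hyU, hyB'⟩
        have hd' : |g ↑u - g ↑y| ≤ 1/2 := by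
          have : dist (f u) (f y) = |g ↑u - g ↑y| := by
            simp [hfdef, Complex.dist_eq, ← Complex.ofReal_sub, Complex.norm_real]
          linarith [this ▸ hd]
        have h34 : (3/4 : ℝ) < g ↑u := hu34
        have : (0 : ℝ) < g ↑y := by
          have := abs_le.mp hd'
          linarith
        by_contra hyV
        have : g ↑y = 0 := hg0 hyV
        linarith
  · rintro ⟨h1, h2⟩
    constructor
    · intro B hB
      have hsub : st B 𝒰 ⊆ st (closure B) 𝒰 := st_mono subset_closure 𝒰
      exact (h1 (closure B) hB).of_isClosed_subset isClosed_closure (closure_mono hsub)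
    · rintro B hB f ⟨g, hgc, hfg⟩ ε hε
      have hc : ∀ x : ↥(Xᶜ), ∃ W : Set H, IsOpen W ∧ ↑x ∈ W ∧
          W ⊆ g ⁻¹' (Metric.ball (g ↑x) (ε/2)) ∧
          ∀ U ∈ 𝒰, ((Subtype.val '' U) ∩ W).Nonempty →
            Subtype.val '' U ⊆ g ⁻¹' (Metric.ball (g ↑x) (ε/2)) := by
        intro x
        exact h2 ↑x x.2 _ (Metric.isOpen_ball.preimage hgc)
          (by simp only [mem_preimage, Metric.mem_ball, dist_self]; linarith)
      choose W hWopen hWmem hWsub hWprop using hc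
      have hcov : (Xᶜ : Set H) ⊆ ⋃ x : ↥(Xᶜ), W x :=
        fun y hy => mem_iUnion.mpr ⟨⟨y, hy⟩, hWmem _⟩
      have hXc : IsCompact (Xᶜ : Set H) := hXopen.isClosed_compl.isCompact
      obtain ⟨t, ht⟩ := hXc.elim_finite_subcover W hWopen hcov
      set K : Set H := (⋃ i ∈ t, W i)ᶜ with hKdef
      have hKclosed : IsClosed K := (isOpen_biUnion fun i _ => hWopen i).isClosed_compl
      have hKX : K ⊆ X := fun y hy => by
        by_contra h
        exact hy (ht h)
      set S : Set ↥X := Subtype.val ⁻¹' K with hSdef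
      have hSclosed : IsClosed S := hKclosed.preimage continuous_subtype_val
      have hScomp : IsCompact S := by
        rw [Subtype.isCompact_iff, Subtype.image_preimage_coe, inter_eq_right.mpr hKX]
        exact hKclosed.isCompact
      refine ⟨B ∪ S, ?_, subset_union_left, ?_⟩
      · show IsCompact (closure (B ∪ S))
        rw [closure_union, hSclosed.closure_eq]
        exact hB.union hScomp
      · intro U hU a ha b hb
        have haK : ↑a ∉ K := fun h => ha.2 (Or.inr h)
        have : (a : H) ∈ ⋃ i ∈ t, W i := not_not.mp fun h => haK h
        obtain ⟨i, hit, hai⟩ := mem_iUnion₂.mp this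
        have hsub := hWprop i U hU ⟨↑a, ⟨a, ha.1, rfl⟩, hai⟩
        have haV : dist (g ↑a) (g ↑i) < ε/2 := hsub ⟨a, ha.1, rfl⟩
        have hbV : dist (g ↑b) (g ↑i) < ε/2 := hsub ⟨b, hb.1, rfl⟩
        calc dist (f a) (f b) = dist (g ↑a) (g ↑b) := by rw [hfg, hfg]
          _ ≤ dist (g ↑a) (g ↑i) + dist (g ↑i) (g ↑b) := dist_triangle _ _ _
          _ ≤ ε/2 + ε/2 := by rw [dist_comm (g ↑i)]; linarith
          _ = ε := by ring
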